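/- Let u be a nonzero vector in F_2^n, and let S be a finite multiset of vectors in F_2^n none of which is congruent to 0 mod u (i.e., no element equals 0 or u), such that the sum of S equals |S|·u. Then S can be partitioned into u-good multisets. -/

import Mathlib

/-- A multiset `D` of vectors in `F_2^n` is `u`-good if its sum equals `|D| • u`
and its elements can be ordered so that the partial sums are pairwise distinct
modulo the span of `u`. -/
def UGood {n : ℕ} (u : Fin n → ZMod 2) (D : Multiset (Fin n → ZMod 2)) : Prop :=
  D.sum = Multiset.card D • u ∧
  ∃ l : List (Fin n → ZMod 2), (l : Multiset (Fin n → ZMod 2)) = D ∧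
    ∀ j j' : ℕ, j < j' → j' < l.length →
      (l.take j').sum - (l.take j).sum ∉ Submodule.span (ZMod 2) {u}

open Multiset

variable {n : ℕ}

abbrev V (n : ℕ) := Fin n → ZMod 2

lemma vadd_self (x : V n) : x + x = 0 := by
  ext i; exact CharTwo.add_self_eq_zero (x i)

lemma vneg (x : V n) : -x = x := by
  ext i; exact CharTwo.neg_eq (x i)

lemma natsmul (c : ℕ) (u : V n) : c • u = (c : ZMod 2) • u :=
  (Nat.cast_smul_eq_nsmul _ _ _).symm

def Good (u : V n) (T : Multiset (V n)) : Prop :=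
  T.sum = ((Multiset.card T : ZMod 2)) • u

lemma good_iff (u : V n) (T : Multiset (V n)) :
    Good u T ↔ T.sum = Multiset.card T • u := by
  rw [Good, natsmul]

def Zs (u : V n) (T : Multiset (V n)) : Prop :=
  T.sum ∈ Submodule.span (ZMod 2) {u}

lemma good_zs {u : V n} {T : Multiset (V n)} (h : Good u T) : Zs u T := by
  rw [Zs, h]
  exact Submodule.smul_mem _ _ (Submodule.mem_span_singleton_self u)

lemma bad_sum {u : V n} {T : Multiset (V n)} (hz : Zs u T) (hg : ¬ Good u T) :
    T.sum = ((Multiset.card T : ZMod 2) + 1) • u := by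
  rw [Zs, Submodule.mem_span_singleton] at hz
  obtain ⟨a, ha⟩ := hz
  have : a ≠ (Multiset.card T : ZMod 2) := by
    rintro rfl; exact hg ha.symm
  have h2 : ∀ a b : ZMod 2, a ≠ b → a = b + 1 := by decide
  have := h2 _ _ this
  rw [← ha, this]

lemma exists_minZ (u : V n) (S : Multiset (V n)) (hS : S ≠ 0) (hZ : Zs u S) :
    ∃ B ≤ S, B ≠ 0 ∧ Zs u B ∧
      ∀ C ≤ S, C ≠ 0 → Zs u C → Multiset.card B ≤ Multiset.card C := by
  classical
  have hex : ∃ k, ∃ B ≤ S, B ≠ 0 ∧ Zs u B ∧ Multiset.card B = k :=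
    ⟨_, S, le_rfl, hS, hZ, rfl⟩
  obtain ⟨B, hBS, hB0, hBZ, hBk⟩ := Nat.find_spec hex
  refine ⟨B, hBS, hB0, hBZ, ?_⟩
  intro C hCS hC0 hCZ
  rw [hBk]
  exact Nat.find_min' hex ⟨C, hCS, hC0, hCZ, rfl⟩

lemma two_le_card {u : V n} {B : Multiset (V n)}
    (h0 : ∀ x ∈ B, x ∉ Submodule.span (ZMod 2) {u}) (hB0 : B ≠ 0) (hBZ : Zs u B) :
    2 ≤ Multiset.card B := by
  rcases Nat.lt_or_ge (Multiset.card B) 2 with h | h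
  · interval_cases hc : Multiset.card B
    · exact absurd (Multiset.card_eq_zero.mp hc) hB0
    · obtain ⟨x, rfl⟩ := Multiset.card_eq_one.mp hc
      exact absurd (by simpa [Zs] using hBZ) (h0 x (by simp))
  · exact h

-- segment of a list
lemma take_diff_sum (l : List (V n)) (k k' : ℕ) (hk : k ≤ k') :
    (l.take k').sum - (l.take k).sum = ((l.drop k).take (k' - k)).sum := by
  have h1 : l.take k' = l.take k ++ (l.drop k).take (k' - k) := by
    have : k' = k + (k' - k) := by omega
    rw [this, List.take_add]
    simp
  rw [h1, List.sum_append]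
  abel

lemma seg_le (l : List (V n)) (k d : ℕ) :
    (((l.drop k).take d : List (V n)) : Multiset (V n)) ≤ (l : Multiset (V n)) := by
  have h1 : l = l.take k ++ ((l.drop k).take d ++ (l.drop k).drop d) := by
    simp
  calc (((l.drop k).take d : List (V n)) : Multiset (V n))
      ≤ ↑((l.drop k).take d) + (↑(l.take k) + ↑((l.drop k).drop d)) := le_add_right _ _
    _ = ↑(l : List (V n)) := by
        conv_rhs => rw [h1]
        simp only [← Multiset.coe_add]
        push_cast
        ac_rfl

/-- a "circuit" (set minimal among nonempty Zs-subsets of itself) which is Good is UGood;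
more generally we only need: every nonempty Zs-multiset ≤ B has card ≥ card B. -/
lemma circuit_ugood {u : V n} {B : Multiset (V n)}
    (hmin : ∀ C ≤ B, C ≠ 0 → Zs u C → Multiset.card B ≤ Multiset.card C)
    (hg : Good u B) : UGood u B := by
  classical
  refine ⟨(good_iff u B).mp hg, B.toList, Multiset.coe_toList B, ?_⟩
  intro j j' hjj hj' hmem
  set l := B.toList with hl
  have hlen : l.length = Multiset.card B := Multiset.length_toList B
  have hs : (l.take j').sum - (l.take j).sum = ((l.drop j).take (j' - j)).sum :=
    take_diff_sum l j j' (le_of_lt hjj)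
  set M : Multiset (V n) := (((l.drop j).take (j' - j) : List (V n)) : Multiset (V n)) with hM
  have hML : M ≤ B := by
    have := seg_le l j (j' - j)
    rwa [Multiset.coe_toList] at this
  have hMcard : Multiset.card M = j' - j := by
    rw [hM, Multiset.coe_card, List.length_take, List.length_drop]
    omega
  have hM0 : M ≠ 0 := by
    intro h
    rw [h] at hMcard
    simp at hMcard
    omega
  have hMZ : Zs u M := by
    rw [Zs, hM, Multiset.sum_coe, ← hs]
    exact hmem
  have := hmin M hML hM0 hMZ
  omega

lemma exists_sub_of_mem_span {u : V n} {B : Multiset (V n)} {w : V n}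
    (hB : ∀ x ∈ B, x ∉ Submodule.span (ZMod 2) {u})
    (hw : w ∈ Submodule.span (ZMod 2) (insert u {x | x ∈ B})) :
    ∃ E ≤ B, E.sum = w ∨ E.sum = w + u := by
  classical
  rw [Submodule.mem_span_set] at hw
  obtain ⟨c, hsupp, hsum⟩ := hw
  set t := c.support with ht
  have hsum' : ∑ m ∈ t, m = w := by
    rw [← hsum, Finsupp.sum]
    apply Finset.sum_congr rfl
    intro m hm
    have h1 : c m ≠ 0 := Finsupp.mem_support_iff.mp hm
    have h2 : c m = 1 := by
      have : ∀ a : ZMod 2, a ≠ 0 → a = 1 := by decide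
      exact this _ h1
    rw [h2, one_smul]
  set E : Multiset (V n) := (t.erase u).val with hE
  have hEB : E ≤ B := by
    rw [Multiset.le_iff_count]
    intro a
    by_cases ha : a ∈ t.erase u
    · have h1 : Multiset.count a E = 1 := by
        rw [hE, Multiset.count_eq_one_of_mem (t.erase u).nodup ha]
      have haB : a ∈ B := by
        have h3 := hsupp (Finset.mem_coe.mpr (Finset.mem_of_mem_erase ha))
        rcases Set.mem_insert_iff.mp h3 with h4 | h4
        · exact absurd h4 (Finset.ne_of_mem_erase ha)
        · exact h4
      have h5 : 1 ≤ Multiset.count a B := Multiset.one_le_count_iff_mem.mpr haB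
      omega
    · have h1 : Multiset.count a E = 0 := by
        rw [hE, Multiset.count_eq_zero]
        exact fun h => ha h
      omega
  refine ⟨E, hEB, ?_⟩
  have hEsum : E.sum = ∑ m ∈ t.erase u, m := by
    rw [hE, Finset.sum]
    simp
  by_cases hu : u ∈ t
  · right
    have h6 : u + ∑ m ∈ t.erase u, m = ∑ m ∈ t, m := Finset.add_sum_erase t (fun m => m) hu
    rw [hsum'] at h6
    rw [hEsum, ← h6, add_comm u, add_assoc, vadd_self, add_zero]
  · left
    rw [hEsum, Finset.erase_eq_of_notMem hu, hsum']

lemma prefix_mem_span (u : V n) (l : List (V n)) (k : ℕ) :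
    (l.take k).sum ∈ Submodule.span (ZMod 2)
      (insert u {x | x ∈ (l : Multiset (V n))}) := by
  apply list_sum_mem
  intro x hx
  exact Submodule.subset_span
    (Set.mem_insert_of_mem _ (Multiset.mem_coe.mpr (List.mem_of_mem_take hx)))

lemma prefix_dichotomy {u : V n} (l : List (V n))
    (hmin : ∀ C ≤ (l : Multiset (V n)), C ≠ 0 → Zs u C →
      l.length ≤ Multiset.card C)
    {k k' : ℕ} (hk : k ≤ k') (hk' : k' ≤ l.length)
    (h : (l.take k').sum - (l.take k).sum ∈ Submodule.span (ZMod 2) {u}) :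
    k' = k ∨ (k = 0 ∧ k' = l.length) := by
  rcases Nat.eq_or_lt_of_le hk with rfl | hlt
  · exact Or.inl rfl
  set M : Multiset (V n) := (((l.drop k).take (k' - k) : List (V n)) : Multiset (V n)) with hM
  have hMcard : Multiset.card M = k' - k := by
    rw [hM, Multiset.coe_card, List.length_take, List.length_drop]
    omega
  have hM0 : M ≠ 0 := by
    intro h0
    rw [h0] at hMcard
    simp at hMcard
    omega
  have hMZ : Zs u M := by
    rw [Zs, hM, Multiset.sum_coe, ← take_diff_sum l k k' hk]
    exact h
  have := hmin M (seg_le l k (k' - k)) hM0 hMZ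
  right
  omega

lemma splice {u : V n} {B B' : Multiset (V n)}
    (h0 : ∀ x ∈ B + B', x ∉ Submodule.span (ZMod 2) {u})
    (hB0 : B ≠ 0) (hB'0 : B' ≠ 0) (hBZ : Zs u B) (hB'Z : Zs u B')
    (hminB : ∀ C ≤ B + B', C ≠ 0 → Zs u C → Multiset.card B ≤ Multiset.card C)
    (hminB' : ∀ C ≤ B', C ≠ 0 → Zs u C → Multiset.card B' ≤ Multiset.card C)
    (hno : ∀ w, w ∈ Submodule.span (ZMod 2) (insert u {x | x ∈ B}) →
        w ∈ Submodule.span (ZMod 2) (insert u {x | x ∈ B'}) →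
        w ∈ Submodule.span (ZMod 2) {u})
    (hgS : Good u (B + B')) : UGood u (B + B') := by
  classical
  set p := Multiset.card B with hp
  set q := Multiset.card B' with hq
  have hp2 : 2 ≤ p := two_le_card (fun x hx => h0 x (Multiset.mem_add.mpr (Or.inl hx))) hB0 hBZ
  have hq2 : 2 ≤ q := two_le_card (fun x hx => h0 x (Multiset.mem_add.mpr (Or.inr hx))) hB'0 hB'Z
  set lB := B.toList with hlB
  set lB' := B'.toList with hlB'
  have hcB : (lB : Multiset (V n)) = B := Multiset.coe_toList B
  have hcB' : (lB' : Multiset (V n)) = B' := Multiset.coe_toList B'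
  have hplen : lB.length = p := Multiset.length_toList B
  have hqlen : lB'.length = q := Multiset.length_toList B'
  have hBne : lB ≠ [] := by
    intro h; rw [h] at hplen; simp at hplen; omega
  have hB'ne : lB' ≠ [] := by
    intro h; rw [h] at hqlen; simp at hqlen; omega
  set bp := lB.getLast hBne with hbp
  set cq := lB'.getLast hB'ne with hcq
  set l : List (V n) := lB.dropLast ++ (lB'.dropLast ++ [bp, cq]) with hl
  have hdlB : lB.dropLast = lB.take (p - 1) := by
    rw [List.dropLast_eq_take, hplen]
  have hdlB' : lB'.dropLast = lB'.take (q - 1) := by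
    rw [List.dropLast_eq_take, hqlen]
  have hBsplit : lB.dropLast ++ [bp] = lB := List.dropLast_append_getLast hBne
  have hB'split : lB'.dropLast ++ [cq] = lB' := List.dropLast_append_getLast hB'ne
  have hlen : l.length = p + q := by
    rw [hl]
    simp only [List.length_append, List.length_dropLast, List.length_cons,
      List.length_nil, hplen, hqlen]
    omega
  have hcoe : (l : Multiset (V n)) = B + B' := by
    have e1 : ((lB.dropLast : List (V n)) : Multiset (V n)) + ↑([bp] : List (V n)) = B := by
      rw [Multiset.coe_add, hBsplit, hcB]
    have e2 : ((lB'.dropLast : List (V n)) : Multiset (V n)) + ↑([cq] : List (V n)) = B' := by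
      rw [Multiset.coe_add, hB'split, hcB']
    rw [hl]
    rw [← e1, ← e2]
    have e3 : ([bp, cq] : List (V n)) = [bp] ++ [cq] := rfl
    simp only [← Multiset.coe_add, e3]
    ac_rfl
  -- the prefix sum formula
  have claim : ∀ k, k ≤ p + q - 1 →
      (l.take k).sum = (lB.take (if k = p + q - 1 then p else min k (p - 1))).sum
        + (lB'.take (min (k - (p - 1)) (q - 1))).sum := by
    intro k hk
    have e1 : l.take k = (lB.dropLast).take k ++
        ((lB'.dropLast ++ [bp, cq]).take (k - (p - 1))) := by
      rw [hl, List.take_append, List.length_dropLast, hplen]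
    have e2 : (lB'.dropLast ++ [bp, cq]).take (k - (p - 1)) =
        (lB'.dropLast).take (k - (p - 1)) ++
          ([bp, cq].take (k - (p - 1) - (q - 1))) := by
      rw [List.take_append, List.length_dropLast, hqlen]
    rw [e1, e2, List.sum_append, List.sum_append]
    rw [hdlB, List.take_take, hdlB', List.take_take]
    by_cases hk1 : k = p + q - 1
    · rw [if_pos hk1]
      have h3 : k - (p - 1) - (q - 1) = 1 := by omega
      have h4 : min k (p - 1) = p - 1 := by omega
      have h5 : min (k - (p - 1)) (q - 1) = q - 1 := by omega
      rw [h3, h4, h5]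
      have h6 : ([bp, cq] : List (V n)).take 1 = [bp] := rfl
      rw [h6]
      have h6' : ([bp] : List (V n)).sum = bp := by simp
      rw [h6']
      have h7 : (lB.take (p - 1)).sum + bp = (lB.take p).sum := by
        have h8 : lB.take p = lB := by
          rw [← hplen, List.take_length]
        rw [h8]
        conv_rhs => rw [← hBsplit]
        rw [List.sum_append, ← hdlB]
        simp
      rw [← h7]
      abel
    · rw [if_neg hk1]
      have h3 : k - (p - 1) - (q - 1) = 0 := by omega
      rw [h3]
      simp
  -- main argument
  refine ⟨(good_iff _ _).mp hgS, l, hcoe, ?_⟩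
  intro j j' hjj hj' hmem
  rw [hlen] at hj'
  have hj'le : j' ≤ p + q - 1 := by omega
  have hjle : j ≤ p + q - 1 := by omega
  rw [claim j' hj'le, claim j hjle] at hmem
  set kBj := if j = p + q - 1 then p else min j (p - 1) with hkBj
  set kBj' := if j' = p + q - 1 then p else min j' (p - 1) with hkBj'
  set kCj := min (j - (p - 1)) (q - 1) with hkCj
  set kCj' := min (j' - (p - 1)) (q - 1) with hkCj'
  have hspan1 : Submodule.span (ZMod 2) ({u} : Set (V n)) ≤
      Submodule.span (ZMod 2) (insert u {x | x ∈ B}) :=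
    Submodule.span_mono (Set.singleton_subset_iff.mpr (Set.mem_insert u _))
  have hspan2 : Submodule.span (ZMod 2) ({u} : Set (V n)) ≤
      Submodule.span (ZMod 2) (insert u {x | x ∈ B'}) :=
    Submodule.span_mono (Set.singleton_subset_iff.mpr (Set.mem_insert u _))
  have hXB : ∀ k, (lB.take k).sum ∈ Submodule.span (ZMod 2) (insert u {x | x ∈ B}) := by
    intro k; have := prefix_mem_span u lB k; rwa [hcB] at this
  have hYB : ∀ k, (lB'.take k).sum ∈ Submodule.span (ZMod 2) (insert u {x | x ∈ B'}) := by
    intro k; have := prefix_mem_span u lB' k; rwa [hcB'] at this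
  have hXd : (lB.take kBj').sum - (lB.take kBj).sum
      ∈ Submodule.span (ZMod 2) (insert u {x | x ∈ B}) := sub_mem (hXB _) (hXB _)
  have hXd' : (lB.take kBj').sum - (lB.take kBj).sum
      ∈ Submodule.span (ZMod 2) (insert u {x | x ∈ B'}) := by
    have he : (lB.take kBj').sum - (lB.take kBj).sum =
        (((lB.take kBj').sum + (lB'.take kCj').sum) - ((lB.take kBj).sum + (lB'.take kCj).sum))
          - ((lB'.take kCj').sum - (lB'.take kCj).sum) := by abel
    rw [he]
    exact sub_mem (hspan2 hmem) (sub_mem (hYB _) (hYB _))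
  have hXspan : (lB.take kBj').sum - (lB.take kBj).sum ∈ Submodule.span (ZMod 2) {u} :=
    hno _ hXd hXd'
  have hYspan : (lB'.take kCj').sum - (lB'.take kCj).sum ∈ Submodule.span (ZMod 2) {u} := by
    have he : (lB'.take kCj').sum - (lB'.take kCj).sum =
        (((lB.take kBj').sum + (lB'.take kCj').sum) - ((lB.take kBj).sum + (lB'.take kCj).sum))
          - ((lB.take kBj').sum - (lB.take kBj).sum) := by abel
    rw [he]
    exact sub_mem hmem hXspan
  have hminB1 : ∀ C ≤ (lB : Multiset (V n)), C ≠ 0 → Zs u C → lB.length ≤ Multiset.card C := by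
    intro C hC hC0 hCZ
    rw [hplen]
    exact hminB C ((hcB ▸ hC).trans (Multiset.le_add_right _ _)) hC0 hCZ
  have hminB'1 : ∀ C ≤ (lB' : Multiset (V n)), C ≠ 0 → Zs u C → lB'.length ≤ Multiset.card C := by
    intro C hC hC0 hCZ
    rw [hqlen]
    exact hminB' C (hcB' ▸ hC) hC0 hCZ
  have hkBle : kBj ≤ kBj' := by
    rw [hkBj, hkBj']
    have : j ≠ p + q - 1 := by omega
    rw [if_neg this]
    by_cases h : j' = p + q - 1
    · rw [if_pos h]; omega
    · rw [if_neg h]; omega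
  have hkBle' : kBj' ≤ lB.length := by
    rw [hkBj', hplen]
    by_cases h : j' = p + q - 1
    · rw [if_pos h]
    · rw [if_neg h]; omega
  have hkCle : kCj ≤ kCj' := by rw [hkCj, hkCj']; omega
  have hkCle' : kCj' ≤ lB'.length := by rw [hkCj', hqlen]; omega
  have dX := prefix_dichotomy lB hminB1 hkBle hkBle' hXspan
  have dY := prefix_dichotomy lB' hminB'1 hkCle hkCle' hYspan
  rw [hplen] at dX
  rw [hqlen] at dY
  have hjne : j ≠ p + q - 1 := by omega
  have e1 : kBj = min j (p - 1) := by rw [hkBj, if_neg hjne]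
  by_cases hc : j' = p + q - 1
  · have e2 : kBj' = p := by rw [hkBj', if_pos hc]
    omega
  · have e2 : kBj' = min j' (p - 1) := by rw [hkBj', if_neg hc]
    omega

lemma key (u : V n) :
    ∀ N S, Multiset.card S ≤ N → (∀ x ∈ S, x ∉ Submodule.span (ZMod 2) {u}) →
      S ≠ 0 → Good u S → ∃ D ≤ S, D ≠ 0 ∧ UGood u D := by
  classical
  intro N
  induction N with
  | zero =>
    intro S hc hS0 hS hg
    exact absurd (Multiset.card_eq_zero.mp (by omega)) hS
  | succ N ih =>
    intro S hc h0 hS hg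
    have hZS : Zs u S := good_zs hg
    obtain ⟨B, hBS, hB0, hBZ, hBmin⟩ := exists_minZ u S hS hZS
    by_cases hGB : Good u B
    · exact ⟨B, hBS, hB0, circuit_ugood (fun C hC => hBmin C (hC.trans hBS)) hGB⟩
    have hBbad := bad_sum hBZ hGB
    have hSB0 : S - B ≠ 0 := by
      intro h
      have h1 : S ≤ B := tsub_eq_zero_iff_le.mp h
      have h2 : B = S := le_antisymm hBS h1
      rw [h2] at hGB
      exact hGB hg
    have hsplit : (S - B) + B = S := tsub_add_cancel_of_le hBS
    have hsumSB : (S - B).sum + B.sum = S.sum := by rw [← Multiset.sum_add, hsplit]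
    have hcardSB : Multiset.card (S - B) + Multiset.card B = Multiset.card S := by
      rw [← Multiset.card_add, hsplit]
    have hZSB : Zs u (S - B) := by
      rw [Zs, eq_sub_of_add_eq hsumSB]
      exact sub_mem hZS hBZ
    obtain ⟨B', hB'SB, hB'0, hB'Z, hB'min⟩ := exists_minZ u (S - B) hSB0 hZSB
    have hB'S : B' ≤ S := hB'SB.trans tsub_le_self
    by_cases hGB' : Good u B'
    · exact ⟨B', hB'S, hB'0,
        circuit_ugood (fun C hC => hB'min C (hC.trans hB'SB)) hGB'⟩
    have hB'bad := bad_sum hB'Z hGB'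
    have hsplit2 : ((S - B) - B') + B' = S - B := tsub_add_cancel_of_le hB'SB
    have hsum2 : ((S - B) - B').sum + B'.sum = (S - B).sum := by
      rw [← Multiset.sum_add, hsplit2]
    have hcard2 : Multiset.card ((S - B) - B') + Multiset.card B' = Multiset.card (S - B) := by
      rw [← Multiset.card_add, hsplit2]
    have hpB : 2 ≤ Multiset.card B :=
      two_le_card (fun x hx => h0 x (Multiset.mem_of_le hBS hx)) hB0 hBZ
    have hpB' : 2 ≤ Multiset.card B' :=
      two_le_card (fun x hx => h0 x (Multiset.mem_of_le hB'S hx)) hB'0 hB'Z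
    by_cases hR : (S - B) - B' = 0
    case neg =>
      -- recurse into R
      set R := (S - B) - B' with hRdef
      have hRle : R ≤ S := (tsub_le_self).trans tsub_le_self
      have hgR : Good u R := by
        rw [Good, eq_sub_of_add_eq hsum2, eq_sub_of_add_eq hsumSB, hg, hBbad, hB'bad,
          ← sub_smul, ← sub_smul]
        congr 1
        have hcast : (Multiset.card R : ZMod 2) + (Multiset.card B' : ZMod 2)
            + (Multiset.card B : ZMod 2) = (Multiset.card S : ZMod 2) := by
          have : ((Multiset.card R + Multiset.card B' + Multiset.card B : ℕ) : ZMod 2)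
              = ((Multiset.card S : ℕ) : ZMod 2) := by
            congr 1
            omega
          push_cast at this
          exact this
        have key2 : ∀ s b b' r : ZMod 2, r + b' + b = s →
            s - (b + 1) - (b' + 1) = r := by decide
        exact key2 _ _ _ _ hcast
      obtain ⟨D, hDle, hD0, hDg⟩ := ih R (by omega)
        (fun x hx => h0 x (Multiset.mem_of_le hRle hx)) hR hgR
      exact ⟨D, hDle.trans hRle, hD0, hDg⟩
    case pos =>
      have hSBB' : S - B = B' := by
        exact le_antisymm (tsub_eq_zero_iff_le.mp hR) hB'SB
      have hS2 : S = B + B' := by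
        rw [← hsplit, hSBB', add_comm]
      by_cases hex : ∃ w, w ∈ Submodule.span (ZMod 2) (insert u {x | x ∈ B}) ∧
          w ∈ Submodule.span (ZMod 2) (insert u {x | x ∈ B'}) ∧
          w ∉ Submodule.span (ZMod 2) {u}
      · obtain ⟨w, hw1, hw2, hw3⟩ := hex
        obtain ⟨E, hEB, hEsum⟩ :=
          exists_sub_of_mem_span (fun x hx => h0 x (Multiset.mem_of_le hBS hx)) hw1
        obtain ⟨F, hFB', hFsum⟩ :=
          exists_sub_of_mem_span (fun x hx => h0 x (Multiset.mem_of_le hB'S hx)) hw2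
        have hu_mem : u ∈ Submodule.span (ZMod 2) ({u} : Set (V n)) :=
          Submodule.mem_span_singleton_self u
        have hEs : E.sum ∉ Submodule.span (ZMod 2) {u} := by
          rcases hEsum with h | h
          · rw [h]; exact hw3
          · rw [h]; intro hmem; exact hw3 (by simpa using sub_mem hmem hu_mem)
        have hFs : F.sum ∉ Submodule.span (ZMod 2) {u} := by
          rcases hFsum with h | h
          · rw [h]; exact hw3
          · rw [h]; intro hmem; exact hw3 (by simpa using sub_mem hmem hu_mem)
        have hE0 : E ≠ 0 := by
          rintro rfl; exact hEs (by simp)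
        have hF0 : F ≠ 0 := by
          rintro rfl; exact hFs (by simp)
        have hEltB : E < B := lt_of_le_of_ne hEB (by rintro rfl; exact hEs hBZ)
        have hFltB' : F < B' := lt_of_le_of_ne hFB' (by rintro rfl; exact hFs hB'Z)
        set M := E + F with hMdef
        have hM0 : M ≠ 0 := by
          intro h
          rw [hMdef] at h
          have := congrArg Multiset.card h
          simp only [Multiset.card_add, Multiset.card_zero] at this
          exact hE0 (Multiset.card_eq_zero.mp (by omega))
        have hMZ : Zs u M := by
          have hEw : E.sum - w ∈ Submodule.span (ZMod 2) {u} := by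
            rcases hEsum with h | h
            · rw [h]; simp
            · rw [h]; simpa using hu_mem
          have hFw : F.sum - w ∈ Submodule.span (ZMod 2) {u} := by
            rcases hFsum with h | h
            · rw [h]; simp
            · rw [h]; simpa using hu_mem
          have h2w : w + w = 0 := vadd_self w
          have heq : M.sum = (E.sum - w) + (F.sum - w) := by
            rw [hMdef, Multiset.sum_add]
            have : (E.sum - w) + (F.sum - w) = E.sum + F.sum - (w + w) := by abel
            rw [this, h2w, sub_zero]
          rw [Zs, heq]
          exact add_mem hEw hFw
        have hMle : M ≤ S := by
          rw [hS2, hMdef]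
          exact add_le_add hEB hFB'
        obtain ⟨C, hCM, hC0, hCZ, hCmin⟩ := exists_minZ u M hM0 hMZ
        by_cases hGC : Good u C
        · exact ⟨C, hCM.trans hMle, hC0,
            circuit_ugood (fun C' hC' => hCmin C' (hC'.trans hCM)) hGC⟩
        have hCbad := bad_sum hCZ hGC
        set CB := C ∩ E with hCBdef
        set CF := C - E with hCFdef
        have hCsplit : CB + CF = C := by
          ext a
          rw [Multiset.count_add, hCBdef, hCFdef, Multiset.count_inter, Multiset.count_sub]
          omega
        have hCBE : CB ≤ E := Multiset.inter_le_right
        have hCFF : CF ≤ F := by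
          rw [hCFdef, Multiset.sub_le_iff_le_add]
          rw [add_comm]
          exact hCM
        have hCB0 : CB ≠ 0 := by
          intro h
          rw [h, zero_add] at hCsplit
          have hCB' : C ≤ B' := (hCsplit ▸ hCFF).trans (le_of_lt hFltB')
          have h1 := hB'min C (hCB'.trans (le_of_eq hSBB'.symm)) hC0 hCZ
          have h2 : Multiset.card C ≤ Multiset.card F := Multiset.card_le_card (hCsplit ▸ hCFF)
          have h3 : Multiset.card F < Multiset.card B' := Multiset.card_lt_card hFltB'
          omega
        have hCF0 : CF ≠ 0 := by
          intro h
          rw [h, add_zero] at hCsplit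
          have hCB2 : C ≤ B := (hCsplit ▸ hCBE).trans (le_of_lt hEltB)
          have h1 := hBmin C (hCB2.trans hBS) hC0 hCZ
          have h2 : Multiset.card C ≤ Multiset.card E := Multiset.card_le_card (hCsplit ▸ hCBE)
          have h3 : Multiset.card E < Multiset.card B := Multiset.card_lt_card hEltB
          omega
        have hCBB : CB ≤ B := hCBE.trans hEltB.le
        set D := (B - CB) + CF with hDdef
        have hDle : D ≤ S := by
          rw [hS2, hDdef]
          exact add_le_add tsub_le_self (hCFF.trans hFltB'.le)
        have hD0 : D ≠ 0 := by
          intro h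
          rw [hDdef] at h
          have := congrArg Multiset.card h
          simp only [Multiset.card_add, Multiset.card_zero] at this
          exact hCF0 (Multiset.card_eq_zero.mp (by omega))
        have hBC : (B - CB) + CB = B := tsub_add_cancel_of_le hCBB
        have hcardBC : Multiset.card (B - CB) + Multiset.card CB = Multiset.card B := by
          rw [← Multiset.card_add, hBC]
        have hcardC : Multiset.card CB + Multiset.card CF = Multiset.card C := by
          rw [← Multiset.card_add, hCsplit]
        have hcardS : Multiset.card B + Multiset.card B' = Multiset.card S := by
          rw [← Multiset.card_add, ← hS2]
        have hcardCB1 : 1 ≤ Multiset.card CB := by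
          rcases Nat.eq_zero_or_pos (Multiset.card CB) with h | h
          · exact absurd (Multiset.card_eq_zero.mp h) hCB0
          · omega
        have hcardCF : Multiset.card CF ≤ Multiset.card F := Multiset.card_le_card hCFF
        have hcardF : Multiset.card F < Multiset.card B' := Multiset.card_lt_card hFltB'
        have hcardD : Multiset.card D = Multiset.card (B - CB) + Multiset.card CF := by
          rw [hDdef, Multiset.card_add]
        have hgD : Good u D := by
          have hDsum : D.sum = B.sum + C.sum := by
            have e2 : (B - CB).sum + CB.sum = B.sum := by rw [← Multiset.sum_add, hBC]
            have e3 : CB.sum + CF.sum = C.sum := by rw [← Multiset.sum_add, hCsplit]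
            have e4 : D.sum = (B - CB).sum + CF.sum := by rw [hDdef, Multiset.sum_add]
            rw [e4, ← e2, ← e3]
            have e5 : ((B - CB).sum + CB.sum) + (CB.sum + CF.sum)
                = ((B - CB).sum + CF.sum) + (CB.sum + CB.sum) := by abel
            rw [e5, vadd_self, add_zero]
          rw [Good, hDsum, hBbad, hCbad, ← add_smul]
          congr 1
          have hNat : Multiset.card D + (Multiset.card CB + Multiset.card CB)
              = Multiset.card B + Multiset.card C := by omega
          have hcast : (Multiset.card D : ZMod 2) + ((Multiset.card CB : ZMod 2)
              + (Multiset.card CB : ZMod 2))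
              = (Multiset.card B : ZMod 2) + (Multiset.card C : ZMod 2) := by
            have := congrArg (fun k : ℕ => (k : ZMod 2)) hNat
            push_cast at this
            exact this
          have key2 : ∀ b c d x : ZMod 2, d + (x + x) = b + c → b + 1 + (c + 1) = d := by
            decide
          exact key2 _ _ _ _ hcast
        obtain ⟨D', hD'le, hD'0, hD'g⟩ := ih D (by omega)
          (fun x hx => h0 x (Multiset.mem_of_le hDle hx)) hD0 hgD
        exact ⟨D', hD'le.trans hDle, hD'0, hD'g⟩
      · push_neg at hex
        refine ⟨S, le_rfl, hS, ?_⟩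
        have hminB2 : ∀ C ≤ B + B', C ≠ 0 → Zs u C → Multiset.card B ≤ Multiset.card C := by
          intro C hC hC0 hCZ
          exact hBmin C (hS2 ▸ hC) hC0 hCZ
        have hminB'2 : ∀ C ≤ B', C ≠ 0 → Zs u C → Multiset.card B' ≤ Multiset.card C := by
          intro C hC hC0 hCZ
          exact hB'min C (hC.trans (le_of_eq hSBB'.symm)) hC0 hCZ
        have := splice (hS2 ▸ h0) hB0 hB'0 hBZ hB'Z hminB2 hminB'2 hex (hS2 ▸ hg)
        rw [← hS2] at this
        exact this


theorem partition_into_ugood (n : ℕ) (u : Fin n → ZMod 2) (hu : u ≠ 0)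
    (S : Multiset (Fin n → ZMod 2))
    (h0 : ∀ x ∈ S, x ∉ Submodule.span (ZMod 2) {u})
    (hsum : S.sum = Multiset.card S • u) :
    ∃ P : Multiset (Multiset (Fin n → ZMod 2)),
      P.sum = S ∧ ∀ D ∈ P, UGood u D := by
  classical
  clear hu
  suffices H : ∀ N (S : Multiset (Fin n → ZMod 2)), Multiset.card S ≤ N →
      (∀ x ∈ S, x ∉ Submodule.span (ZMod 2) {u}) →
      S.sum = Multiset.card S • u →
      ∃ P : Multiset (Multiset (Fin n → ZMod 2)), P.sum = S ∧ ∀ D ∈ P, UGood u D by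
    exact H (Multiset.card S) S le_rfl h0 hsum
  clear h0 hsum S
  intro N
  induction N with
  | zero =>
    intro S hc h0 hsum
    have h1 : S = 0 := Multiset.card_eq_zero.mp (by omega)
    subst h1
    exact ⟨0, by simp, by simp⟩
  | succ N ih =>
  intro S hc h0 hsum
  by_cases hS : S = 0
  · subst hS; exact ⟨0, by simp, by simp⟩
  · have hg : Good u S := (good_iff u S).mpr hsum
    obtain ⟨D, hDS, hD0, hDg⟩ := key u (N + 1) S hc h0 hS hg
    have hDsum : D.sum = Multiset.card D • u := hDg.1
    have hsplit : (S - D) + D = S := tsub_add_cancel_of_le hDS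
    have hsum2 : (S - D).sum + D.sum = S.sum := by rw [← Multiset.sum_add, hsplit]
    have hcard2 : Multiset.card (S - D) + Multiset.card D = Multiset.card S := by
      rw [← Multiset.card_add, hsplit]
    have hD1 : 1 ≤ Multiset.card D := by
      rcases Nat.eq_zero_or_pos (Multiset.card D) with h | h
      · exact absurd (Multiset.card_eq_zero.mp h) hD0
      · omega
    have hsumR : (S - D).sum = Multiset.card (S - D) • u := by
      have h1 : (S - D).sum + D.sum
          = Multiset.card (S - D) • u + Multiset.card D • u := by
        rw [hsum2, hsum, ← hcard2, add_nsmul]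
      rw [hDsum] at h1
      exact add_right_cancel h1
    obtain ⟨P, hPsum, hPg⟩ := ih (S - D) (by omega)
      (fun x hx => h0 x (Multiset.mem_of_le tsub_le_self hx)) hsumR
    refine ⟨D ::ₘ P, ?_, ?_⟩
    · rw [Multiset.sum_cons, hPsum, add_comm, hsplit]
    · intro D' hD'
      rcases Multiset.mem_cons.mp hD' with rfl | h
      · exact hDg
      · exact hPg D' h
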